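/- arXiv:math/0601195 — 3 statements merged into one kernel-verified Lean document; each statement's English description precedes it below -/
import Mathlib

section
/- Let a : [0,1] → ℝ be a C^m function (m ≥ 1) with a(x) = 0 for x ≤ 1-δ and a^{(m)}(x) ≥ 0 for x ≥ 1-δ. Then for each integer n with 1 ≤ n < m there exists a constant C > 0 such that |a^{(n)}(x)| ≤ C · a(x)^{(m-n)/m} for all x ∈ [1-δ, 1]. -/
open Set

private lemma aux_within {m k : ℕ} {a : ℝ → ℝ} (ha : ContDiff ℝ (m:ℕ∞) a) (hk : k ≤ m) {s : Set ℝ}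
    (hs : UniqueDiffOn ℝ s) {x : ℝ} (hx : x ∈ s) :
    iteratedDerivWithin k a s x = iteratedDeriv k a x := by
  have h0 : HasFTaylorSeriesUpToOn (m:ℕ∞) a (ftaylorSeries ℝ a) Set.univ := by
    rw [← ftaylorSeriesWithin_univ]
    exact (ha.contDiffOn).ftaylorSeriesWithin uniqueDiffOn_univ
  have h := ((h0.mono (Set.subset_univ s)).eq_iteratedFDerivWithin_of_uniqueDiffOn
    (by exact_mod_cast hk) hs hx).symm
  rw [iteratedDerivWithin_eq_iteratedFDerivWithin, iteratedDeriv_eq_iteratedFDeriv, h]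
  rfl

private lemma aux_zero {m : ℕ} {a : ℝ → ℝ} (ha : ContDiff ℝ (m:ℕ∞) a) {c : ℝ}
    (h0 : ∀ y ≤ c, a y = 0) : ∀ k ≤ m, ∀ y ≤ c, iteratedDeriv k a y = 0 := by
  intro k
  induction k with
  | zero => intro _ y hy; simpa using h0 y hy
  | succ k ih =>
    intro hk y hy
    have hk' : k ≤ m := (Nat.lt_succ_self k).le.trans hk
    have hio : ∀ z < c, iteratedDeriv (k+1) a z = 0 := by
      intro z hz
      rw [iteratedDeriv_succ]
      have he : iteratedDeriv k a =ᶠ[nhds z] fun _ => (0:ℝ) := by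
        filter_upwards [Iio_mem_nhds hz] with w hw using ih hk' w hw.le
      rw [he.deriv_eq]
      simp
    rcases lt_or_eq_of_le hy with h | h
    · exact hio y h
    · subst h
      have hcont : Continuous (iteratedDeriv (k+1) a) :=
        ha.continuous_iteratedDeriv _ (by exact_mod_cast hk)
      have h1 : Filter.Tendsto (iteratedDeriv (k+1) a) (nhdsWithin y (Set.Iio y))
          (nhds (iteratedDeriv (k+1) a y)) :=
        (hcont.tendsto y).mono_left nhdsWithin_le_nhds
      have h2 : Filter.Tendsto (iteratedDeriv (k+1) a) (nhdsWithin y (Set.Iio y)) (nhds 0) := by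
        refine Filter.Tendsto.congr' ?_ tendsto_const_nhds
        filter_upwards [self_mem_nhdsWithin] with z hz
        exact (hio z hz).symm
      exact tendsto_nhds_unique h1 h2

private lemma aux_nonneg {m : ℕ} {a : ℝ → ℝ} {c : ℝ} (hm : 0 < m) (hc : c < 1)
    (ha : ContDiff ℝ (m:ℕ∞) a) (h0 : ∀ y ≤ c, a y = 0)
    (hsign : ∀ x ∈ Set.Icc c 1, 0 ≤ iteratedDeriv m a x) :
    ∀ j k, k + j = m → ∀ x ∈ Icc c 1, 0 ≤ iteratedDeriv k a x := by
  intro j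
  induction j with
  | zero => intro k hk; subst hk; simpa using hsign
  | succ j ih =>
    intro k hk x hx
    have hk1 : (k+1) + j = m := by omega
    have hkm : k < m := by omega
    have hmono : MonotoneOn (iteratedDeriv k a) (Icc c 1) := by
      apply monotoneOn_of_deriv_nonneg (convex_Icc c 1)
      · exact (ha.continuous_iteratedDeriv _ (by exact_mod_cast hkm.le)).continuousOn
      · exact (ha.differentiable_iteratedDeriv _ (by exact_mod_cast hkm)).differentiableOn
      · intro z hz
        rw [interior_Icc] at hz
        rw [← iteratedDeriv_succ]
        exact ih (k+1) hk1 z ⟨hz.1.le, hz.2.le⟩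
    have h1 : iteratedDeriv k a c = 0 := aux_zero ha h0 k hkm.le c le_rfl
    calc (0:ℝ) = iteratedDeriv k a c := h1.symm
      _ ≤ iteratedDeriv k a x := hmono ⟨le_rfl, hc.le⟩ hx hx.1

private lemma aux_mono {m : ℕ} {a : ℝ → ℝ} {c : ℝ} (hm : 0 < m) (hc : c < 1)
    (ha : ContDiff ℝ (m:ℕ∞) a) (h0 : ∀ y ≤ c, a y = 0)
    (hsign : ∀ x ∈ Set.Icc c 1, 0 ≤ iteratedDeriv m a x)
    {k : ℕ} (hkm : k < m) : MonotoneOn (iteratedDeriv k a) (Icc c 1) := by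
  apply monotoneOn_of_deriv_nonneg (convex_Icc c 1)
  · exact (ha.continuous_iteratedDeriv _ (by exact_mod_cast hkm.le)).continuousOn
  · exact (ha.differentiable_iteratedDeriv _ (by exact_mod_cast hkm)).differentiableOn
  · intro z hz
    rw [interior_Icc] at hz
    rw [← iteratedDeriv_succ]
    exact aux_nonneg hm hc ha h0 hsign (m - (k+1)) (k+1) (by omega) z ⟨hz.1.le, hz.2.le⟩

private lemma aux_poly {m : ℕ} {a : ℝ → ℝ} {c : ℝ} (hm : 0 < m) (hc : c < 1)
    (ha : ContDiff ℝ (m:ℕ∞) a) (h0 : ∀ y ≤ c, a y = 0)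
    (hsign : ∀ x ∈ Set.Icc c 1, 0 ≤ iteratedDeriv m a x)
    {M : ℝ} (hM : 0 ≤ M) (hMb : ∀ x ∈ Icc c 1, iteratedDeriv m a x ≤ M) :
    ∀ j k, k + j = m → ∀ x ∈ Icc c 1,
      iteratedDeriv k a x ≤ M * (x - c)^j / (j.factorial) := by
  intro j
  induction j with
  | zero =>
    intro k hk x hx; subst hk
    simpa using hMb x hx
  | succ j ih =>
    intro k hk x hx
    have hk1 : (k+1) + j = m := by omega
    have hkm : k < m := by omega
    set φ : ℝ → ℝ := fun z => M / (j+1).factorial * (z - c)^(j+1) - iteratedDeriv k a z with hφ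
    have hder : ∀ z : ℝ, HasDerivAt (fun z => M / (j+1).factorial * (z - c)^(j+1))
        (M / (j+1).factorial * (((j+1:ℕ)) * (z - c)^j)) z := by
      intro z
      have h1 : HasDerivAt (fun z : ℝ => (z - c)^(j+1)) (((j+1:ℕ)) * (z - c)^j) z := by
        simpa using ((hasDerivAt_id z).sub_const c).fun_pow (j+1)
      simpa using h1.const_mul (M / (j+1).factorial)
    have hdiff : Differentiable ℝ (iteratedDeriv k a) :=
      ha.differentiable_iteratedDeriv _ (by exact_mod_cast hkm)
    have hφmono : MonotoneOn φ (Icc c 1) := by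
      apply monotoneOn_of_deriv_nonneg (convex_Icc c 1)
      · exact (Continuous.sub (by continuity)
          (ha.continuous_iteratedDeriv _ (by exact_mod_cast hkm.le))).continuousOn
      · exact (Differentiable.sub (by fun_prop) hdiff).differentiableOn
      · intro z hz
        rw [interior_Icc] at hz
        have hd : HasDerivAt φ (M / (j+1).factorial * (((j+1:ℕ)) * (z - c)^j)
            - iteratedDeriv (k+1) a z) z := by
          have := (hder z).sub ((hdiff z).hasDerivAt)
          rwa [← iteratedDeriv_succ] at this
        rw [hd.deriv]
        have hzc : (0:ℝ) ≤ z - c := by linarith [hz.1]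
        have hle := ih (k+1) hk1 z ⟨hz.1.le, hz.2.le⟩
        have heq : M / (j+1).factorial * (((j+1:ℕ)) * (z - c)^j) = M * (z - c)^j / j.factorial := by
          rw [Nat.factorial_succ]; push_cast; field_simp
        rw [heq]; linarith
    have hφc : φ c = 0 := by
      simp [hφ, aux_zero ha h0 k hkm.le c le_rfl]
    have h2 := hφmono ⟨le_rfl, hc.le⟩ hx hx.1
    rw [hφc] at h2
    have h3 : iteratedDeriv k a x ≤ M / (j+1).factorial * (x - c)^(j+1) := by
      simp only [hφ] at h2; linarith
    calc iteratedDeriv k a x ≤ M / (j+1).factorial * (x - c)^(j+1) := h3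
      _ = M * (x - c)^(j+1) / ((j+1).factorial) := by ring
      _ = M * (x - c)^(j+1) / (((j+1:ℕ)).factorial) := by norm_num

private lemma aux_taylor {m : ℕ} {a : ℝ → ℝ} {c : ℝ} (hm : 0 < m) (hc : c < 1)
    (ha : ContDiff ℝ (m:ℕ∞) a) (h0 : ∀ y ≤ c, a y = 0)
    (hsign : ∀ x ∈ Set.Icc c 1, 0 ≤ iteratedDeriv m a x)
    {x y : ℝ} (hx : x ∈ Icc c 1) (hy : y ∈ Icc c 1) (hyx : y < x)
    {k : ℕ} (hk : k < m) :
    iteratedDeriv k a y * (x - y)^k / k.factorial ≤ a x := by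
  have huniq : UniqueDiffOn ℝ (Icc y x) := uniqueDiffOn_Icc hyx
  have hIcc : Icc y x ⊆ Icc c 1 := Icc_subset_Icc hy.1 hx.2
  have hnn : ∀ j, j ≤ m → ∀ z ∈ Icc y x, 0 ≤ iteratedDeriv j a z := fun j hj z hz =>
    aux_nonneg hm hc ha h0 hsign (m - j) j (by omega) z (hIcc hz)
  have hu : uIcc y x = Icc y x := uIcc_of_le hyx.le
  have hu' : uIoo y x = Ioo y x := uIoo_of_lt hyx
  obtain ⟨x', hx', hrem⟩ := taylor_mean_remainder_lagrange (f := a) (n := m - 1) hyx.ne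
    (ha.contDiffOn.of_le (by exact Nat.cast_le.mpr (Nat.sub_le m 1)))
    (by
      rw [hu, hu']
      apply DifferentiableOn.congr
        ((ha.differentiable_iteratedDeriv (m-1)
          (by exact Nat.cast_lt.mpr (Nat.sub_lt hm one_pos))).differentiableOn)
      intro z hz
      exact aux_within ha (Nat.sub_le m 1) huniq (Ioo_subset_Icc_self hz))
  rw [hu'] at hx'
  rw [hu] at hrem
  rw [Nat.sub_add_cancel hm] at hrem
  have hrem_nonneg : 0 ≤ a x - taylorWithinEval a (m-1) (Icc y x) y x := by
    rw [hrem, aux_within ha le_rfl huniq (Ioo_subset_Icc_self hx')]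
    have h1 := hsign x' (hIcc (Ioo_subset_Icc_self hx'))
    have h2 : (0:ℝ) ≤ (x - y)^m := pow_nonneg (by linarith) m
    positivity
  have hsum : taylorWithinEval a (m-1) (Icc y x) y x =
      ∑ j ∈ Finset.range m, ((x - y)^j / j.factorial) * iteratedDeriv j a y := by
    rw [taylor_within_apply, Nat.sub_add_cancel hm]
    apply Finset.sum_congr rfl
    intro j hj
    rw [aux_within ha (Finset.mem_range.1 hj).le huniq (left_mem_Icc.2 hyx.le), smul_eq_mul]
    ring
  have hterm : (x - y)^k / k.factorial * iteratedDeriv k a y ≤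
      ∑ j ∈ Finset.range m, ((x - y)^j / j.factorial) * iteratedDeriv j a y := by
    apply Finset.single_le_sum (f := fun j => ((x - y)^j / j.factorial) * iteratedDeriv j a y)
      ?_ (Finset.mem_range.2 hk)
    intro j hj
    exact mul_nonneg (div_nonneg (pow_nonneg (by linarith) j) (by positivity))
      (hnn j (Finset.mem_range.1 hj).le y (left_mem_Icc.2 hyx.le))
  calc iteratedDeriv k a y * (x - y)^k / k.factorial
      = (x - y)^k / k.factorial * iteratedDeriv k a y := by ring
    _ ≤ _ := hterm
    _ = taylorWithinEval a (m-1) (Icc y x) y x := hsum.symm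
    _ ≤ a x := by linarith

private lemma aux_main {m : ℕ} {a : ℝ → ℝ} {c : ℝ} (hm : 0 < m) (hc : c < 1)
    (ha : ContDiff ℝ (m:ℕ∞) a) (h0 : ∀ y ≤ c, a y = 0)
    (hsign : ∀ x ∈ Set.Icc c 1, 0 ≤ iteratedDeriv m a x)
    {M : ℝ} (hM : 1 ≤ M) (hMb : ∀ x ∈ Icc c 1, iteratedDeriv m a x ≤ M) :
    ∀ j k, k + j = m → ∃ C > 0, ∀ x ∈ Icc c 1,
      iteratedDeriv k a x ≤ C * a x ^ (((m:ℝ) - k)/m) := by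
  have hm' : (m:ℝ) ≠ 0 := Nat.cast_ne_zero.2 hm.ne'
  have hnn : ∀ k ≤ m, ∀ x ∈ Icc c 1, 0 ≤ iteratedDeriv k a x := fun k hk x hx =>
    aux_nonneg hm hc ha h0 hsign (m - k) k (by omega) x hx
  have hamono : MonotoneOn a (Icc c 1) := by
    have := aux_mono hm hc ha h0 hsign (k := 0) hm
    simpa [iteratedDeriv_zero] using this
  have hanonneg : ∀ x ∈ Icc c 1, 0 ≤ a x := by
    intro x hx
    have := hnn 0 (by omega) x hx
    simpa using this
  intro j
  induction j with
  | zero =>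
    intro k hk
    have hk' : k = m := by omega
    subst hk'
    refine ⟨M, by linarith, ?_⟩
    intro x hx
    have : ((k:ℝ) - k)/k = 0 := by rw [sub_self, zero_div]
    rw [this, Real.rpow_zero, mul_one]
    exact hMb x hx
  | succ j ih =>
    intro k hk
    obtain ⟨C', hC', hC'b⟩ := ih (k+1) (by omega)
    have hkm : k < m := by omega
    have hk1m : k + 1 ≤ m := by omega
    set e : ℝ := ((m:ℝ) - k)/m with he_def
    set e' : ℝ := ((m:ℝ) - (k+1))/m with he'_def
    have hmk : ((m:ℝ) - k) = ((j:ℝ)+1) := by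
      have := congrArg (Nat.cast : ℕ → ℝ) hk; push_cast at this; linarith
    have he_pos : 0 < e := by
      rw [he_def, hmk]
      positivity
    have he'_nonneg : 0 ≤ e' := by
      rw [he'_def]
      apply div_nonneg _ (by positivity)
      have : ((k:ℝ)+1) ≤ m := by exact_mod_cast hk1m
      push_cast; linarith
    refine ⟨(k.factorial : ℝ) + C' + M, by positivity, ?_⟩
    intro x hx
    have hax0 : 0 ≤ a x := hanonneg x hx
    rcases eq_or_lt_of_le hax0 with hA | hApos
    · have h0x : ∀ z ≤ x, a z = 0 := by
        intro z hz
        rcases le_or_gt z c with h | h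
        · exact h0 z h
        · have hzmem : z ∈ Icc c 1 := ⟨h.le, hz.trans hx.2⟩
          have h1 := hanonneg z hzmem
          have h2 : a z ≤ a x := hamono hzmem hx hz
          linarith [hA]
      have hz : iteratedDeriv k a x = 0 := aux_zero ha h0x k hkm.le x le_rfl
      rw [hz, ← hA, Real.zero_rpow he_pos.ne', mul_zero]
    · replace hApos : 0 < a x := hApos
      set h : ℝ := a x ^ ((1:ℝ)/m) with hh_def
      have hhpos : 0 < h := Real.rpow_pos_of_pos hApos _
      have hkey : ∀ p : ℕ, h ^ p = a x ^ ((p:ℝ)/m) := by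
        intro p
        rw [hh_def, ← Real.rpow_natCast (a x ^ ((1:ℝ)/m)) p, ← Real.rpow_mul hax0]
        congr 1; ring
      have hAm : h ^ m = a x := by
        rw [hkey m, div_self hm', Real.rpow_one]
      have he_eq : a x ^ e = h ^ (j+1) := by
        rw [hkey (j+1), he_def, hmk]; push_cast; ring_nf
      rcases lt_or_ge (x - c) h with hcase | hcase
      · have hxc : (0:ℝ) ≤ x - c := by linarith [hx.1]
        have hpoly := aux_poly hm hc ha h0 hsign (by linarith : (0:ℝ) ≤ M) hMb (j+1) k hk x hx
        have hfact : (1:ℝ) ≤ ((j+1).factorial : ℝ) := Nat.one_le_cast.mpr (Nat.factorial_pos _)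
        have hpow : (x - c)^(j+1) ≤ h^(j+1) := pow_le_pow_left₀ hxc hcase.le _
        have h1 : M * (x - c)^(j+1) / ((j+1).factorial : ℝ) ≤ M * h^(j+1) := by
          have h2 : M * (x - c)^(j+1) ≤ M * h^(j+1) :=
            mul_le_mul_of_nonneg_left hpow (by linarith)
          calc M * (x - c)^(j+1) / ((j+1).factorial : ℝ) ≤ M * (x - c)^(j+1) / 1 := by
                apply div_le_div_of_nonneg_left ?_ ?_ hfact
                · positivity
                · norm_num
            _ = M * (x - c)^(j+1) := by ring
            _ ≤ M * h^(j+1) := h2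
        calc iteratedDeriv k a x ≤ M * (x - c)^(j+1) / ((j+1).factorial : ℝ) := by
              exact_mod_cast hpoly
          _ ≤ M * h^(j+1) := h1
          _ = M * a x ^ e := by rw [he_eq]
          _ ≤ ((k.factorial : ℝ) + C' + M) * a x ^ e := by
              apply mul_le_mul_of_nonneg_right _ (Real.rpow_nonneg hax0 _)
              have : (1:ℝ) ≤ (k.factorial : ℝ) := Nat.one_le_cast.mpr (Nat.factorial_pos _)
              linarith
      · set y : ℝ := x - h with hy_def
        have hy : y ∈ Icc c 1 := ⟨by simp only [hy_def]; linarith,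
          by simp only [hy_def]; linarith [hx.2, hhpos]⟩
        have hyx : y < x := by simp only [hy_def]; linarith
        have htay := aux_taylor hm hc ha h0 hsign hx hy hyx hkm
        have hxy : x - y = h := by rw [hy_def]; ring
        rw [hxy] at htay
        have hdy : iteratedDeriv k a y ≤ (k.factorial : ℝ) * a x / h^k := by
          rw [div_le_iff₀ (by positivity)] at htay
          rw [le_div_iff₀ (by positivity : (0:ℝ) < h^k)]
          calc iteratedDeriv k a y * h^k ≤ a x * (k.factorial : ℝ) := htay
            _ = (k.factorial : ℝ) * a x := by ring
        set B : ℝ := C' * a x ^ e' with hB_def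
        have hB : 0 ≤ B := by positivity
        have hdiff : Differentiable ℝ (iteratedDeriv k a) :=
          ha.differentiable_iteratedDeriv _ (Nat.cast_lt.mpr hkm)
        have hderivb : ∀ s ∈ Icc c 1, s ≤ x → iteratedDeriv (k+1) a s ≤ B := by
          intro s hs hsx
          have h1 := hC'b s hs
          have h2 : a s ≤ a x := hamono hs hx hsx
          have h3 : a s ^ e' ≤ a x ^ e' :=
            Real.rpow_le_rpow (hanonneg s hs) h2 he'_nonneg
          push_cast at h1
          rw [← he'_def] at h1
          exact h1.trans (mul_le_mul_of_nonneg_left h3 hC'.le)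
        have hψ : MonotoneOn (fun s => B * s - iteratedDeriv k a s) (Icc y x) := by
          apply monotoneOn_of_deriv_nonneg (convex_Icc y x)
          · exact (Continuous.sub (by fun_prop)
              (ha.continuous_iteratedDeriv _ (Nat.cast_le.mpr hkm.le))).continuousOn
          · exact (Differentiable.sub (by fun_prop) hdiff).differentiableOn
          · intro s hs
            rw [interior_Icc] at hs
            have hd : HasDerivAt (fun s => B * s - iteratedDeriv k a s)
                (B - iteratedDeriv (k+1) a s) s := by
              have := ((hasDerivAt_id s).const_mul B).fun_sub (hdiff s).hasDerivAt
              rw [← iteratedDeriv_succ] at this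
              simpa using this
            rw [hd.deriv]
            have hsmem : s ∈ Icc c 1 := ⟨hy.1.trans hs.1.le, hs.2.le.trans hx.2⟩
            linarith [hderivb s hsmem hs.2.le]
        have hmvt := hψ (left_mem_Icc.2 hyx.le) (right_mem_Icc.2 hyx.le) hyx.le
        simp only at hmvt
        have hstep : iteratedDeriv k a x ≤ iteratedDeriv k a y + B * h := by
          have h5 : B * y - iteratedDeriv k a y ≤ B * x - iteratedDeriv k a x := hmvt
          nlinarith [h5, hxy]
        have hc1 : (k.factorial : ℝ) * a x / h^k = (k.factorial : ℝ) * a x ^ e := by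
          rw [he_eq, ← hAm, show m = k + (j+1) from by omega, pow_add]
          field_simp
        have hc2 : B * h = C' * a x ^ e := by
          rw [hB_def, hh_def, mul_assoc, ← Real.rpow_add hApos]
          congr 2
          rw [he'_def, he_def]
          field_simp
          ring
        calc iteratedDeriv k a x ≤ iteratedDeriv k a y + B * h := hstep
          _ ≤ (k.factorial : ℝ) * a x / h^k + B * h := by linarith
          _ = (k.factorial : ℝ) * a x ^ e + C' * a x ^ e := by rw [hc1, hc2]
          _ = ((k.factorial : ℝ) + C') * a x ^ e := by ring
          _ ≤ ((k.factorial : ℝ) + C' + M) * a x ^ e := by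
              apply mul_le_mul_of_nonneg_right _ (Real.rpow_nonneg hax0 _)
              linarith

theorem stmt_0 (m n : ℕ) (hn : 1 ≤ n) (hnm : n < m)
    (δ : ℝ) (hδ : 0 < δ) (hδ1 : δ < 1)
    (a : ℝ → ℝ) (ha : ContDiff ℝ m a)
    (hvanish : ∀ x : ℝ, x ≤ 1 - δ → a x = 0)
    (hsign : ∀ x ∈ Set.Icc (1 - δ) 1, 0 ≤ iteratedDeriv m a x) :
    ∃ C > 0, ∀ x ∈ Set.Icc (1 - δ) 1,
      |iteratedDeriv n a x| ≤ C * a x ^ (((m : ℝ) - n) / m) := by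
  have hm : 0 < m := by omega
  have hc : 1 - δ < 1 := by linarith
  obtain ⟨M0, hM0⟩ := (isCompact_Icc (a := 1 - δ) (b := (1:ℝ))).exists_bound_of_continuousOn
    (ha.continuous_iteratedDeriv m le_rfl).continuousOn
  set M : ℝ := max M0 1 with hM_def
  have hM1 : 1 ≤ M := le_max_right _ _
  have hMb : ∀ x ∈ Set.Icc (1 - δ) 1, iteratedDeriv m a x ≤ M := by
    intro x hx
    calc iteratedDeriv m a x ≤ ‖iteratedDeriv m a x‖ := le_abs_self _
      _ ≤ M0 := hM0 x hx
      _ ≤ M := le_max_left _ _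
  obtain ⟨C, hC, hCb⟩ := aux_main hm hc ha hvanish hsign hM1 hMb (m - n) n (by omega)
  refine ⟨C, hC, ?_⟩
  intro x hx
  have hnnx : 0 ≤ iteratedDeriv n a x :=
    aux_nonneg hm hc ha hvanish hsign (m - n) n (by omega) x hx
  rw [abs_of_nonneg hnnx]
  exact hCb x hx
end

section
/- Let a : [0,1] → ℝ be C^m with a(x) = 0 for x ≤ 1-δ and a^{(m)} ≥ 0 on [1-δ, 1], where m ≥ 1. Then for x ∈ [1-δ, 1] and any y with 1-δ < y < x, one has |a'(x)| ≤ ((m-1)/(x-y)) · a(x) + M · (x-y)^{m-1}/(m-2)!, where M = sup_{[1-δ,1]} a^{(m)}. -/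
open Set intervalIntegral MeasureTheory
open scoped Nat

private lemma idw_eq {f : ℝ → ℝ} {n k : ℕ} (hf : ContDiff ℝ (n : ℕ) f) (hk : k ≤ n)
    {s : Set ℝ} (hs : UniqueDiffOn ℝ s) {x : ℝ} (hx : x ∈ s) :
    iteratedDerivWithin k f s x = iteratedDeriv k f x := by
  have hf' : ContDiff ℝ ((n : ℕ∞)) f := by exact_mod_cast hf
  have h := contDiff_iff_ftaylorSeries.mp hf'
  have h1 := (h.hasFTaylorSeriesUpToOn s).eq_iteratedFDerivWithin_of_uniqueDiffOn
    (m := k) (by exact_mod_cast hk) hs hx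
  have h2 := h.eq_iteratedFDeriv (m := k) (by exact_mod_cast hk) x
  rw [iteratedDerivWithin_eq_iteratedFDerivWithin, iteratedDeriv_eq_iteratedFDeriv, ← h1, h2]

private lemma taylor_int {n : ℕ} {f : ℝ → ℝ} (hf : ContDiff ℝ ((n : ℕ) + 1) f) {c x : ℝ}
    (hcx : c < x) (h0 : ∀ k ≤ n, iteratedDeriv k f c = 0) :
    f x = ∫ t in c..x, ((n ! : ℝ)⁻¹ * (x - t) ^ n) * iteratedDeriv (n + 1) f t := by
  have hfn1 : ContDiff ℝ ((n + 1 : ℕ) : ℕ) f := by exact_mod_cast hf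
  have hs : UniqueDiffOn ℝ (Icc c x) := uniqueDiffOn_Icc hcx
  have hfn : ContDiffOn ℝ n f (Icc c x) :=
    (hf.of_le (by exact_mod_cast Nat.cast_le.mpr (Nat.le_succ n))).contDiffOn
  have hEq : ∀ t ∈ Icc c x, iteratedDerivWithin n f (Icc c x) t = iteratedDeriv n f t :=
    fun t ht => idw_eq hfn1 (Nat.le_succ n) hs ht
  have hdiffn : Differentiable ℝ (iteratedDeriv n f) :=
    hf.differentiable_iteratedDeriv n (by exact_mod_cast Nat.lt_succ_self n)
  have hf' : DifferentiableOn ℝ (iteratedDerivWithin n f (Icc c x)) (Ioo c x) := by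
    intro t ht
    have hev : iteratedDerivWithin n f (Icc c x) =ᶠ[nhds t] iteratedDeriv n f := by
      filter_upwards [isOpen_Ioo.mem_nhds ht] with s hs using hEq s (Ioo_subset_Icc_self hs)
    exact (hev.differentiableAt_iff.mpr (hdiffn t)).differentiableWithinAt
  have hcontD : Continuous (iteratedDeriv (n + 1) f) :=
    hf.continuous_iteratedDeriv (n + 1) (by exact_mod_cast le_rfl)
  have hcontInt : Continuous fun t => ((n ! : ℝ)⁻¹ * (x - t) ^ n) * iteratedDeriv (n + 1) f t :=
    (continuous_const.mul ((continuous_const.sub continuous_id).pow n)).mul hcontD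
  have key : ∫ t in c..x, ((n ! : ℝ)⁻¹ * (x - t) ^ n) * iteratedDeriv (n + 1) f t
      = (fun t => taylorWithinEval f n (Icc c x) t x) x
        - (fun t => taylorWithinEval f n (Icc c x) t x) c := by
    have hder : ∀ t ∈ Ioo c x, HasDerivWithinAt (fun t => taylorWithinEval f n (Icc c x) t x)
        (((n ! : ℝ)⁻¹ * (x - t) ^ n) * iteratedDeriv (n + 1) f t) (Ioi t) t := by
      intro t ht
      have := taylorWithinEval_hasDerivAt_Ioo x hcx ht hfn hf'
      rw [idw_eq hfn1 le_rfl hs (Ioo_subset_Icc_self ht)] at this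
      exact (this.congr_deriv (by simp [smul_eq_mul])).hasDerivWithinAt
    exact integral_eq_sub_of_hasDeriv_right_of_le hcx.le
      (continuousOn_taylorWithinEval hs hfn) hder (hcontInt.intervalIntegrable _ _)
  rw [key]
  simp only [taylorWithinEval_self]
  have : taylorWithinEval f n (Icc c x) c x = 0 := by
    rw [taylor_within_apply]
    apply Finset.sum_eq_zero
    intro k hk
    have hk' : k ≤ n := by have := Finset.mem_range.mp hk; omega
    rw [idw_eq hfn1 (by omega : k ≤ n + 1) hs (left_mem_Icc.mpr hcx.le), h0 k hk']
    simp
  rw [this]; ring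

theorem stmt_1 (m : ℕ) (hm : 2 ≤ m)
    (δ : ℝ) (hδ : 0 < δ) (hδ1 : δ < 1)
    (a : ℝ → ℝ) (ha : ContDiff ℝ m a)
    (hvanish : ∀ x : ℝ, x ≤ 1 - δ → a x = 0)
    (hsign : ∀ x ∈ Set.Icc (1 - δ) 1, 0 ≤ iteratedDeriv m a x)
    (M : ℝ) (hM : ∀ x ∈ Set.Icc (1 - δ) 1, iteratedDeriv m a x ≤ M)
    (x y : ℝ) (hx : x ∈ Set.Icc (1 - δ) 1) (hy : 1 - δ < y) (hyx : y < x) :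
    |deriv a x| ≤ ((m : ℝ) - 1) / (x - y) * a x
      + M * (x - y) ^ (m - 1) / (Nat.factorial (m - 2)) := by
  set c := 1 - δ with hc
  have hcx : c < x := lt_trans hy hyx
  have hcy : c < y := hy
  have hxy : (0:ℝ) < x - y := by linarith
  -- all iterated derivatives up to order m vanish at c
  have hzero : ∀ k ≤ m, iteratedDeriv k a c = 0 := by
    intro k hk
    have hlt : ∀ t < c, iteratedDeriv k a t = 0 := by
      intro t ht
      have hev : a =ᶠ[nhds t] (fun _ => (0:ℝ)) := by
        filter_upwards [Iio_mem_nhds ht] with s hs using hvanish s (le_of_lt hs)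
      rw [hev.iteratedDeriv_eq k]
      simp [iteratedDeriv_eq_iteratedFDeriv, iteratedFDeriv_zero_fun]
    have hcont : Continuous (iteratedDeriv k a) :=
      ha.continuous_iteratedDeriv k (by exact_mod_cast hk)
    have h1 : Filter.Tendsto (iteratedDeriv k a) (nhdsWithin c (Iio c))
        (nhds (iteratedDeriv k a c)) := (hcont.continuousAt).continuousWithinAt.tendsto
    have h2 : Filter.Tendsto (iteratedDeriv k a) (nhdsWithin c (Iio c)) (nhds 0) := by
      apply Filter.Tendsto.congr' _ tendsto_const_nhds
      filter_upwards [self_mem_nhdsWithin] with t ht using (hlt t ht).symm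
    exact tendsto_nhds_unique h1 h2
  set D := iteratedDeriv m a with hD
  have hDcont : Continuous D := ha.continuous_iteratedDeriv m (by exact_mod_cast le_rfl)
  have hDpos : ∀ t ∈ Icc c x, 0 ≤ D t := fun t ht =>
    hsign t ⟨ht.1, le_trans ht.2 hx.2⟩
  have hDM : ∀ t ∈ Icc c x, D t ≤ M := fun t ht =>
    hM t ⟨ht.1, le_trans ht.2 hx.2⟩
  -- integral formula for a
  have hA : a x = ∫ t in c..x, (((m-1)! : ℝ)⁻¹ * (x - t) ^ (m-1)) * D t := by
    have hf : ContDiff ℝ (((m-1) : ℕ) + 1) a := by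
      have h : (m - 1) + 1 = m := by omega
      rw [show (((m-1) : ℕ) + 1 : WithTop ℕ∞) = ((m : ℕ) : WithTop ℕ∞) from by
        exact_mod_cast congrArg (Nat.cast : ℕ → WithTop ℕ∞) h]
      exact ha
    have := taylor_int (n := m-1) hf hcx (fun k hk => hzero k (by omega))
    rwa [show (m-1) + 1 = m from by omega] at this
  -- integral formula for deriv a
  have hB : deriv a x = ∫ t in c..x, (((m-2)! : ℝ)⁻¹ * (x - t) ^ (m-2)) * D t := by
    have hm' : ((m - 2 : ℕ) + 1) + 1 = m := by omega
    have ha' : ContDiff ℝ (((m-2) : ℕ) + 1) (deriv a) := by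
      have h2 : ContDiff ℝ (((((m-2):ℕ) + 1 : ℕ) : WithTop ℕ∞) + 1) a := by
        rw [show ((((m-2):ℕ) + 1 : ℕ) : WithTop ℕ∞) + 1 = ((m : ℕ) : WithTop ℕ∞) from by
          exact_mod_cast congrArg (Nat.cast : ℕ → WithTop ℕ∞) hm']
        exact ha
      exact_mod_cast (contDiff_succ_iff_deriv.mp h2).2.2
    have hz' : ∀ k ≤ m - 2, iteratedDeriv k (deriv a) c = 0 := by
      intro k hk
      rw [← iteratedDeriv_succ']
      exact hzero (k+1) (by omega)
    have := taylor_int (n := m-2) ha' hcx hz'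
    rw [← iteratedDeriv_succ', show ((m-2) + 1) + 1 = m from hm'] at this
    exact this
  -- integrability facts
  have hcont1 : Continuous fun t => (((m-1)! : ℝ)⁻¹ * (x - t) ^ (m-1)) * D t :=
    (continuous_const.mul ((continuous_const.sub continuous_id).pow _)).mul hDcont
  have hcont2 : Continuous fun t => (((m-2)! : ℝ)⁻¹ * (x - t) ^ (m-2)) * D t :=
    (continuous_const.mul ((continuous_const.sub continuous_id).pow _)).mul hDcont
  -- deriv a x is nonnegative
  have hnonneg : 0 ≤ deriv a x := by
    rw [hB]
    apply intervalIntegral.integral_nonneg hcx.le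
    intro t ht
    have h1 : (0:ℝ) ≤ x - t := by linarith [ht.2]
    have := hDpos t ht
    positivity
  rw [abs_of_nonneg hnonneg, hB]
  -- split the integral at y
  have hsplit : (∫ t in c..x, (((m-2)! : ℝ)⁻¹ * (x - t) ^ (m-2)) * D t)
      = (∫ t in c..y, (((m-2)! : ℝ)⁻¹ * (x - t) ^ (m-2)) * D t)
        + ∫ t in y..x, (((m-2)! : ℝ)⁻¹ * (x - t) ^ (m-2)) * D t :=
    (integral_add_adjacent_intervals (hcont2.intervalIntegrable _ _)
      (hcont2.intervalIntegrable _ _)).symm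
  rw [hsplit]
  have hfact : ((m-1)! : ℝ) = ((m:ℝ) - 1) * ((m-2)! : ℝ) := by
    have h1 : m - 1 = (m - 2) + 1 := by omega
    rw [h1, Nat.factorial_succ]
    push_cast
    have h2 : ((m-2 : ℕ) : ℝ) = (m:ℝ) - 2 := by
      push_cast [Nat.cast_sub (by omega : 2 ≤ m)]; ring
    rw [h2]; ring
  have hm1 : (0:ℝ) < (m:ℝ) - 1 := by
    have : (2:ℝ) ≤ (m:ℝ) := by exact_mod_cast hm
    linarith
  have hf2 : (0:ℝ) < ((m-2)! : ℝ) := by exact_mod_cast Nat.factorial_pos _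
  -- bound the first piece
  have hI1 : (∫ t in c..y, (((m-2)! : ℝ)⁻¹ * (x - t) ^ (m-2)) * D t)
      ≤ ((m:ℝ) - 1) / (x - y) * a x := by
    have step1 : (∫ t in c..y, (((m-2)! : ℝ)⁻¹ * (x - t) ^ (m-2)) * D t)
        ≤ ∫ t in c..y, ((m:ℝ) - 1) / (x - y) * ((((m-1)! : ℝ)⁻¹ * (x - t) ^ (m-1)) * D t) := by
      apply intervalIntegral.integral_mono_on hcy.le (hcont2.intervalIntegrable _ _)
        ((continuous_const.mul hcont1).intervalIntegrable _ _)
      intro t ht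
      have hxt : x - y ≤ x - t := by linarith [ht.2]
      have hxt0 : (0:ℝ) ≤ x - t := by linarith
      have hDt : 0 ≤ D t := hDpos t ⟨ht.1, by linarith [ht.2]⟩
      simp only [Pi.mul_apply]
      rw [hfact, show m - 1 = (m-2) + 1 from by omega, pow_succ]
      rw [mul_inv]
      have key : (x - t) ^ (m-2) * (x - y) ≤ (x - t) ^ (m-2) * (x - t) :=
        mul_le_mul_of_nonneg_left hxt (pow_nonneg hxt0 _)
      have e1 : ((m:ℝ) - 1) / (x - y) * (((m:ℝ) - 1)⁻¹ * ((m-2)! : ℝ)⁻¹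
          * ((x - t) ^ (m-2) * (x - t)) * D t)
          = ((m-2)! : ℝ)⁻¹ * ((x - t) ^ (m-2) * (x - t) / (x - y)) * D t := by
        field_simp
      rw [e1]
      apply mul_le_mul_of_nonneg_right _ hDt
      rw [mul_div_assoc' , le_div_iff₀ hxy]
      calc ((m-2)! : ℝ)⁻¹ * (x - t) ^ (m-2) * (x - y)
          = ((m-2)! : ℝ)⁻¹ * ((x - t) ^ (m-2) * (x - y)) := by ring
        _ ≤ ((m-2)! : ℝ)⁻¹ * ((x - t) ^ (m-2) * (x - t)) := by
            exact mul_le_mul_of_nonneg_left key (by positivity)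
        _ = ((m-2)! : ℝ)⁻¹ * ((x - t) ^ (m-2) * (x - t)) := rfl
    have step2 : (∫ t in c..y, ((m:ℝ) - 1) / (x - y) * ((((m-1)! : ℝ)⁻¹ * (x - t) ^ (m-1)) * D t))
        = ((m:ℝ) - 1) / (x - y) * ∫ t in c..y, (((m-1)! : ℝ)⁻¹ * (x - t) ^ (m-1)) * D t :=
      intervalIntegral.integral_const_mul _ _
    have step3 : (∫ t in c..y, (((m-1)! : ℝ)⁻¹ * (x - t) ^ (m-1)) * D t) ≤ a x := by
      rw [hA, ← integral_add_adjacent_intervals (a := c) (b := y) (c := x)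
        (hcont1.intervalIntegrable _ _) (hcont1.intervalIntegrable _ _)]
      have : 0 ≤ ∫ t in y..x, (((m-1)! : ℝ)⁻¹ * (x - t) ^ (m-1)) * D t := by
        apply intervalIntegral.integral_nonneg hyx.le
        intro t ht
        have h1 : (0:ℝ) ≤ x - t := by linarith [ht.2]
        have := hDpos t ⟨by linarith [ht.1], ht.2⟩
        positivity
      linarith
    calc (∫ t in c..y, (((m-2)! : ℝ)⁻¹ * (x - t) ^ (m-2)) * D t)
        ≤ ((m:ℝ) - 1) / (x - y) * ∫ t in c..y, (((m-1)! : ℝ)⁻¹ * (x - t) ^ (m-1)) * D t := by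
          rw [← step2]; exact step1
      _ ≤ ((m:ℝ) - 1) / (x - y) * a x := by
          apply mul_le_mul_of_nonneg_left step3 (by positivity)
  -- bound the second piece
  have hI2 : (∫ t in y..x, (((m-2)! : ℝ)⁻¹ * (x - t) ^ (m-2)) * D t)
      ≤ M * (x - y) ^ (m - 1) / ((m-2)! : ℝ) := by
    have step1 : (∫ t in y..x, (((m-2)! : ℝ)⁻¹ * (x - t) ^ (m-2)) * D t)
        ≤ ∫ _t in y..x, (((m-2)! : ℝ)⁻¹ * (x - y) ^ (m-2)) * M := by
      apply intervalIntegral.integral_mono_on hyx.le (hcont2.intervalIntegrable _ _)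
        (intervalIntegrable_const)
      intro t ht
      have h1 : (0:ℝ) ≤ x - t := by linarith [ht.2]
      have h2 : x - t ≤ x - y := by linarith [ht.1]
      have hDt0 : 0 ≤ D t := hDpos t ⟨by linarith [ht.1], ht.2⟩
      have hDtM : D t ≤ M := hDM t ⟨by linarith [ht.1], ht.2⟩
      have hp : (x - t) ^ (m-2) ≤ (x - y) ^ (m-2) := pow_le_pow_left₀ h1 h2 _
      calc (((m-2)! : ℝ)⁻¹ * (x - t) ^ (m-2)) * D t
          ≤ (((m-2)! : ℝ)⁻¹ * (x - y) ^ (m-2)) * D t := by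
            apply mul_le_mul_of_nonneg_right _ hDt0
            exact mul_le_mul_of_nonneg_left hp (by positivity)
        _ ≤ (((m-2)! : ℝ)⁻¹ * (x - y) ^ (m-2)) * M := by
            apply mul_le_mul_of_nonneg_left hDtM
            positivity
    have step2 : (∫ _t in y..x, (((m-2)! : ℝ)⁻¹ * (x - y) ^ (m-2)) * M)
        = M * (x - y) ^ (m - 1) / ((m-2)! : ℝ) := by
      rw [intervalIntegral.integral_const, smul_eq_mul]
      rw [show m - 1 = (m-2) + 1 from by omega, pow_succ]
      field_simp
    rw [step2] at step1
    exact step1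
  linarith
end

section
/- Let u ∈ H¹₀((0,1)) (complex-valued) satisfy, in the weak sense, -u'' + 2iλ a u + (k² - λ²) u = f + g' with f, g ∈ L²((0,1)), where λ ∈ ℝ, k ∈ ℕ, k ≥ |λ|, and a ∈ C([0,1]) with a ≥ 0. Then ‖u‖_{L²} ≤ C(‖f‖_{L²} + ‖g‖_{L²}) for an absolute constant C (independent of λ, k, a). -/
open MeasureTheory Complex

/-- The weak formulation of `-u'' + 2iλ a u + (k² - λ²) u = f + g'` on `(0,1)`
with Dirichlet boundary conditions, tested against `C¹` functions vanishing at
the endpoints. -/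
def WeakSol1D (lam : ℝ) (k : ℕ) (a : ℝ → ℝ) (u f g : ℝ → ℂ) : Prop :=
  ∀ φ : ℝ → ℂ, ContDiff ℝ 1 φ → φ 0 = 0 → φ 1 = 0 →
    (∫ x in (0:ℝ)..1, deriv u x * (starRingEnd ℂ) (deriv φ x)
        + ((2 * Complex.I * lam * a x : ℂ) + (k:ℂ)^2 - (lam:ℂ)^2) * u x
            * (starRingEnd ℂ) (φ x))
      = ∫ x in (0:ℝ)..1, f x * (starRingEnd ℂ) (φ x)
          - g x * (starRingEnd ℂ) (deriv φ x)


lemma my_cs {α : Type*} [MeasurableSpace α] {μ : Measure α} {v w : α → ℝ}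
    (hv0 : ∀ x, 0 ≤ v x) (hw0 : ∀ x, 0 ≤ w x)
    (hvm : AEStronglyMeasurable v μ) (hwm : AEStronglyMeasurable w μ)
    (hv2 : Integrable (fun x => v x ^ 2) μ) (hw2 : Integrable (fun x => w x ^ 2) μ) :
    ∫ x, v x * w x ∂μ ≤ Real.sqrt (∫ x, v x ^ 2 ∂μ) * Real.sqrt (∫ x, w x ^ 2 ∂μ) := by
  have hpq : Real.HolderConjugate 2 2 := Real.HolderConjugate.two_two
  have hv : MemLp v 2 μ := (memLp_two_iff_integrable_sq hvm).mpr hv2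
  have hw : MemLp w 2 μ := (memLp_two_iff_integrable_sq hwm).mpr hw2
  have h := integral_mul_le_Lp_mul_Lq_of_nonneg hpq (ae_of_all _ hv0) (ae_of_all _ hw0)
    (by simpa using hv) (by simpa using hw)
  rw [Real.sqrt_eq_rpow, Real.sqrt_eq_rpow]
  have e1 : ∀ x : ℝ, x ^ (2:ℝ) = x ^ (2:ℕ) := fun x => by
    rw [show (2:ℝ) = ((2:ℕ):ℝ) by norm_num, Real.rpow_natCast]
  simpa [e1] using h

lemma my_int_mul {α : Type*} [MeasurableSpace α] {μ : Measure α} {v w : α → ℝ}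
    (hvm : AEStronglyMeasurable v μ) (hwm : AEStronglyMeasurable w μ)
    (hv2 : Integrable (fun x => v x ^ 2) μ) (hw2 : Integrable (fun x => w x ^ 2) μ) :
    Integrable (fun x => v x * w x) μ := by
  have hb : Integrable (fun x => (v x ^ 2 + w x ^ 2) / 2) μ := (hv2.add hw2).div_const 2
  refine Integrable.mono' hb (hvm.mul hwm) (ae_of_all _ fun x => ?_)
  have h1 : ‖v x * w x‖ = |v x| * |w x| := by rw [Real.norm_eq_abs, abs_mul]
  rw [h1]
  nlinarith [sq_nonneg (|v x| - |w x|), _root_.sq_abs (v x), _root_.sq_abs (w x)]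

lemma pt_re (lam : ℝ) (k : ℕ) (r : ℝ) (z w : ℂ) :
    (w * (starRingEnd ℂ) w + ((2 * Complex.I * lam * r : ℂ) + (k:ℂ)^2 - (lam:ℂ)^2) * z
      * (starRingEnd ℂ) z).re = ‖w‖^2 + ((k:ℝ)^2 - lam^2) * ‖z‖^2 := by
  simp [Complex.sq_norm, Complex.normSq_apply, Complex.add_re, Complex.sub_re,
    Complex.mul_re, Complex.mul_im, Complex.conj_re, Complex.conj_im, Complex.I_re, Complex.I_im,
    Complex.ofReal_re, Complex.ofReal_im]
  rw [show ((k:ℂ)^2).re = ((k:ℝ))^2 by rw [← Nat.cast_pow, Complex.natCast_re, Nat.cast_pow],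
    show ((lam:ℂ)^2).re = lam^2 by rw [← Complex.ofReal_pow, Complex.ofReal_re]]
  ring

theorem stmt_4 :
    ∃ C > 0, ∀ (lam : ℝ) (k : ℕ) (a : ℝ → ℝ) (u f g : ℝ → ℂ),
      |lam| ≤ (k : ℝ) →
      ContinuousOn a (Set.Icc 0 1) → (∀ x ∈ Set.Icc (0:ℝ) 1, 0 ≤ a x) →
      ContDiff ℝ 1 u → u 0 = 0 → u 1 = 0 →
      IntervalIntegrable (fun x => ‖f x‖ ^ 2) volume 0 1 →
      IntervalIntegrable (fun x => ‖g x‖ ^ 2) volume 0 1 →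
      WeakSol1D lam k a u f g →
      Real.sqrt (∫ x in (0:ℝ)..1, ‖u x‖ ^ 2)
        ≤ C * (Real.sqrt (∫ x in (0:ℝ)..1, ‖f x‖ ^ 2)
             + Real.sqrt (∫ x in (0:ℝ)..1, ‖g x‖ ^ 2)) := by
  refine ⟨1, one_pos, ?_⟩
  intro lam k a u f g hlk ha ha0 hu hu0 hu1 hf2 hg2 hweak
  have hu_c : Continuous u := hu.continuous
  have hu'_c : Continuous (deriv u) := hu.continuous_deriv le_rfl
  set A := ∫ x in (0:ℝ)..1, ‖deriv u x‖^2 with hA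
  set B := ∫ x in (0:ℝ)..1, ‖u x‖^2 with hB
  set F := Real.sqrt (∫ x in (0:ℝ)..1, ‖f x‖^2) with hF
  set G := Real.sqrt (∫ x in (0:ℝ)..1, ‖g x‖^2) with hG
  have hA_ii : IntervalIntegrable (fun x => ‖deriv u x‖^2) volume 0 1 :=
    ((hu'_c.norm.pow 2).intervalIntegrable 0 1)
  have hB_ii : IntervalIntegrable (fun x => ‖u x‖^2) volume 0 1 :=
    ((hu_c.norm.pow 2).intervalIntegrable 0 1)
  have A0 : 0 ≤ A := intervalIntegral.integral_nonneg zero_le_one (fun x _ => by positivity)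
  have B0 : 0 ≤ B := intervalIntegral.integral_nonneg zero_le_one (fun x _ => by positivity)
  have F0 : 0 ≤ F := Real.sqrt_nonneg _
  have G0 : 0 ≤ G := Real.sqrt_nonneg _
  have hc0 : 0 ≤ (k:ℝ)^2 - lam^2 := by
    have := pow_le_pow_left₀ (abs_nonneg lam) hlk 2
    rw [_root_.sq_abs] at this; linarith
  -- the weak formulation with φ = u
  have happ := hweak u hu hu0 hu1
  -- measurability of norms of f and g
  have hfm2 : AEStronglyMeasurable (fun x => ‖f x‖^2) (volume.restrict (Set.Ioc (0:ℝ) 1)) :=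
    hf2.1.aestronglyMeasurable
  have hgm2 : AEStronglyMeasurable (fun x => ‖g x‖^2) (volume.restrict (Set.Ioc (0:ℝ) 1)) :=
    hg2.1.aestronglyMeasurable
  have hfm : AEStronglyMeasurable (fun x => ‖f x‖) (volume.restrict (Set.Ioc (0:ℝ) 1)) := by
    have := Real.continuous_sqrt.comp_aestronglyMeasurable hfm2
    simpa [Real.sqrt_sq (norm_nonneg _)] using this
  have hgm : AEStronglyMeasurable (fun x => ‖g x‖) (volume.restrict (Set.Ioc (0:ℝ) 1)) := by
    have := Real.continuous_sqrt.comp_aestronglyMeasurable hgm2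
    simpa [Real.sqrt_sq (norm_nonneg _)] using this
  have hum : AEStronglyMeasurable (fun x => ‖u x‖) (volume.restrict (Set.Ioc (0:ℝ) 1)) :=
    hu_c.norm.aestronglyMeasurable
  have hu'm : AEStronglyMeasurable (fun x => ‖deriv u x‖) (volume.restrict (Set.Ioc (0:ℝ) 1)) :=
    hu'_c.norm.aestronglyMeasurable
  -- LHS integrand is interval integrable
  have hL_ii : IntervalIntegrable (fun x => deriv u x * (starRingEnd ℂ) (deriv u x)
      + ((2 * Complex.I * lam * a x : ℂ) + (k:ℂ)^2 - (lam:ℂ)^2) * u x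
          * (starRingEnd ℂ) (u x)) volume 0 1 := by
    apply ContinuousOn.intervalIntegrable
    rw [Set.uIcc_of_le zero_le_one]
    apply ContinuousOn.add
    · exact (hu'_c.mul (continuous_star.comp hu'_c)).continuousOn
    · apply ContinuousOn.mul
      · apply ContinuousOn.mul
        · apply ContinuousOn.sub
          · apply ContinuousOn.add
            · exact (continuousOn_const.mul (Complex.continuous_ofReal.comp_continuousOn ha))
            · exact continuousOn_const
          · exact continuousOn_const
        · exact hu_c.continuousOn
      · exact (continuous_star.comp hu_c).continuousOn
  -- real part of the equation
  have hre : A + ((k:ℝ)^2 - lam^2) * B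
      = (∫ x in (0:ℝ)..1, f x * (starRingEnd ℂ) (u x)
          - g x * (starRingEnd ℂ) (deriv u x)).re := by
    rw [← happ]
    have h1 : (∫ x in (0:ℝ)..1, deriv u x * (starRingEnd ℂ) (deriv u x)
        + ((2 * Complex.I * lam * a x : ℂ) + (k:ℂ)^2 - (lam:ℂ)^2) * u x
            * (starRingEnd ℂ) (u x)).re
        = ∫ x in (0:ℝ)..1, (deriv u x * (starRingEnd ℂ) (deriv u x)
        + ((2 * Complex.I * lam * a x : ℂ) + (k:ℂ)^2 - (lam:ℂ)^2) * u x
            * (starRingEnd ℂ) (u x)).re := by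
      rw [intervalIntegral.integral_of_le zero_le_one,
        intervalIntegral.integral_of_le zero_le_one]
      have := integral_re (𝕜 := ℂ) hL_ii.1
      simpa using this.symm
    rw [h1]
    have h2 : ∀ x ∈ Set.uIcc (0:ℝ) 1, (deriv u x * (starRingEnd ℂ) (deriv u x)
        + ((2 * Complex.I * lam * a x : ℂ) + (k:ℂ)^2 - (lam:ℂ)^2) * u x
            * (starRingEnd ℂ) (u x)).re
        = ‖deriv u x‖^2 + ((k:ℝ)^2 - lam^2) * ‖u x‖^2 := fun x _ => pt_re lam k (a x) (u x) (deriv u x)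
    rw [intervalIntegral.integral_congr h2,
      intervalIntegral.integral_add hA_ii (hB_ii.const_mul _),
      intervalIntegral.integral_const_mul]
  -- bound on the right-hand side
  have hfu_int : Integrable (fun x => ‖f x‖ * ‖u x‖) (volume.restrict (Set.Ioc (0:ℝ) 1)) :=
    my_int_mul hfm hum hf2.1 hB_ii.1
  have hgu'_int : Integrable (fun x => ‖g x‖ * ‖deriv u x‖) (volume.restrict (Set.Ioc (0:ℝ) 1)) :=
    my_int_mul hgm hu'm hg2.1 hA_ii.1
  have hrhs : (∫ x in (0:ℝ)..1, f x * (starRingEnd ℂ) (u x)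
      - g x * (starRingEnd ℂ) (deriv u x)).re
      ≤ (∫ x in Set.Ioc (0:ℝ) 1, ‖f x‖ * ‖u x‖)
        + ∫ x in Set.Ioc (0:ℝ) 1, ‖g x‖ * ‖deriv u x‖ := by
    rw [intervalIntegral.integral_of_le zero_le_one]
    set R := ∫ x in Set.Ioc (0:ℝ) 1, (f x * (starRingEnd ℂ) (u x)
        - g x * (starRingEnd ℂ) (deriv u x)) with hR
    calc R.re ≤ ‖R‖ := by
          exact Complex.re_le_norm R
      _ ≤ ∫ x in Set.Ioc (0:ℝ) 1, ‖f x * (starRingEnd ℂ) (u x)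
            - g x * (starRingEnd ℂ) (deriv u x)‖ := norm_integral_le_integral_norm _
      _ ≤ ∫ x in Set.Ioc (0:ℝ) 1, (‖f x‖ * ‖u x‖ + ‖g x‖ * ‖deriv u x‖) := by
          apply integral_mono_of_nonneg (ae_of_all _ fun x => norm_nonneg _)
            (hfu_int.add hgu'_int) (ae_of_all _ fun x => ?_)
          calc ‖f x * (starRingEnd ℂ) (u x) - g x * (starRingEnd ℂ) (deriv u x)‖
              ≤ ‖f x * (starRingEnd ℂ) (u x)‖ + ‖g x * (starRingEnd ℂ) (deriv u x)‖ :=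
                norm_sub_le _ _
            _ = ‖f x‖ * ‖u x‖ + ‖g x‖ * ‖deriv u x‖ := by
                rw [norm_mul, norm_mul, RCLike.norm_conj, RCLike.norm_conj]
      _ = _ := integral_add hfu_int hgu'_int
  -- Cauchy–Schwarz
  have hcs1 : (∫ x in Set.Ioc (0:ℝ) 1, ‖f x‖ * ‖u x‖) ≤ F * Real.sqrt B := by
    have := my_cs (fun x => norm_nonneg (f x)) (fun x => norm_nonneg (u x)) hfm hum hf2.1 hB_ii.1
    rw [hF, hB, intervalIntegral.integral_of_le zero_le_one,
      intervalIntegral.integral_of_le zero_le_one]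
    exact this
  have hcs2 : (∫ x in Set.Ioc (0:ℝ) 1, ‖g x‖ * ‖deriv u x‖) ≤ G * Real.sqrt A := by
    have := my_cs (fun x => norm_nonneg (g x)) (fun x => norm_nonneg (deriv u x)) hgm hu'm
      hg2.1 hA_ii.1
    rw [hG, hA, intervalIntegral.integral_of_le zero_le_one,
      intervalIntegral.integral_of_le zero_le_one]
    exact this
  -- Poincaré: B ≤ A
  have hint1 : (∫ x in (0:ℝ)..1, ‖deriv u x‖) ≤ Real.sqrt A := by
    have h1 : (∫ x in Set.Ioc (0:ℝ) 1, ‖deriv u x‖ * (1:ℝ))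
        ≤ Real.sqrt (∫ x in Set.Ioc (0:ℝ) 1, ‖deriv u x‖^2)
          * Real.sqrt (∫ x in Set.Ioc (0:ℝ) 1, (1:ℝ)^2) := by
      exact my_cs (fun x => norm_nonneg _) (fun _ => zero_le_one) hu'm
        aestronglyMeasurable_const hA_ii.1 (integrable_const _)
    have h2 : (∫ x in Set.Ioc (0:ℝ) 1, ((1:ℝ))^2) = 1 := by
      simp [Real.volume_Ioc]
    rw [h2, Real.sqrt_one, mul_one] at h1
    simp only [mul_one] at h1
    rw [intervalIntegral.integral_of_le zero_le_one, hA,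
      intervalIntegral.integral_of_le zero_le_one]
    exact h1
  have hux : ∀ x ∈ Set.Icc (0:ℝ) 1, ‖u x‖ ≤ Real.sqrt A := by
    intro x hx
    have hd : ∀ t ∈ Set.uIcc (0:ℝ) x, DifferentiableAt ℝ u t :=
      fun t _ => (hu.differentiable one_ne_zero).differentiableAt
    have hftc : (∫ t in (0:ℝ)..x, deriv u t) = u x - u 0 :=
      intervalIntegral.integral_deriv_eq_sub hd (hu'_c.intervalIntegrable 0 x)
    have h1 : ‖u x‖ ≤ ∫ t in (0:ℝ)..x, ‖deriv u t‖ := by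
      rw [show u x = ∫ t in (0:ℝ)..x, deriv u t by rw [hftc, hu0, sub_zero]]
      exact intervalIntegral.norm_integral_le_integral_norm hx.1
    have h2 : (∫ t in (0:ℝ)..x, ‖deriv u t‖) ≤ ∫ t in (0:ℝ)..1, ‖deriv u t‖ :=
      intervalIntegral.integral_mono_interval le_rfl hx.1 hx.2
        (ae_of_all _ fun t => norm_nonneg _) (hu'_c.norm.intervalIntegrable 0 1)
    exact (h1.trans h2).trans hint1
  have hBA : B ≤ A := by
    have : (∫ x in (0:ℝ)..1, ‖u x‖^2) ≤ ∫ x in (0:ℝ)..1, A := by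
      apply intervalIntegral.integral_mono_on zero_le_one hB_ii intervalIntegrable_const
      intro x hx
      calc ‖u x‖^2 ≤ (Real.sqrt A)^2 :=
            pow_le_pow_left₀ (norm_nonneg _) (hux x hx) 2
        _ = A := Real.sq_sqrt A0
    simpa using this
  -- combine
  have key : A ≤ (F + G) * Real.sqrt A := by
    have h1 : A ≤ F * Real.sqrt B + G * Real.sqrt A := by
      nlinarith [hre ▸ hrhs, hcs1, hcs2, mul_nonneg hc0 B0]
    have h2 : Real.sqrt B ≤ Real.sqrt A := Real.sqrt_le_sqrt hBA
    nlinarith [Real.sqrt_nonneg A]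
  have hsA : Real.sqrt A ≤ F + G := by
    rcases eq_or_lt_of_le (Real.sqrt_nonneg A) with h | h
    · rw [← h]; positivity
    · have : Real.sqrt A * Real.sqrt A ≤ (F + G) * Real.sqrt A := by
        rwa [Real.mul_self_sqrt A0]
      exact le_of_mul_le_mul_right this h
  rw [one_mul]
  exact (Real.sqrt_le_sqrt hBA).trans hsA
end
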